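/- If k ≥ d + 1, then the product poset [k] × Q, where Q is a finite graded poset whose longest chains have d elements, has exactly k − d + 1 rank levels of size |Q|, and these are its largest rank levels. -/
import Mathlib


open Finset

/-- If `k ≥ d + 1` and `Q` is a finite graded poset whose longest chains have `d`
elements, then `[k] × Q` has exactly `k - d + 1` rank levels of size `|Q|`,
and all its rank levels have size at most `|Q|`. -/
theorem stmt_17 {Q : Type*} [Fintype Q] [PartialOrder Q] (d k : ℕ) (hd : 0 < d)
    (hk : d + 1 ≤ k)
    (r : Q → ℕ)
    (hmin : ∀ x : Q, (∀ y : Q, ¬y < x) → r x = 1)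
    (hcov : ∀ x y : Q, x ⋖ y → r y = r x + 1)
    (hrange : ∀ x : Q, r x ∈ Finset.Icc 1 d)
    (hsurj : ∀ i ∈ Finset.Icc 1 d, ∃ x : Q, r x = i)
    (L : ℕ → Finset (Fin k × Q))
    (hL : ∀ i, L i = Finset.univ.filter (fun p : Fin k × Q => (p.1 : ℕ) + 1 + r p.2 = i + 1)) :
    ((Finset.Icc 1 (d + k - 1)).filter (fun i => (L i).card = Fintype.card Q)).card
        = k - d + 1 ∧
    ∀ i ∈ Finset.Icc 1 (d + k - 1), (L i).card ≤ Fintype.card Q := by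
  classical
  have hinj : ∀ i, Set.InjOn Prod.snd ((L i : Set (Fin k × Q))) := by
    intro i p hp q hq h
    simp only [hL, Finset.coe_filter, Set.mem_setOf_eq] at hp hq
    have : (p.1 : ℕ) = (q.1 : ℕ) := by rw [h] at hp; omega
    exact Prod.ext (Fin.ext this) h
  have hle : ∀ i, (L i).card ≤ Fintype.card Q := by
    intro i
    have := Finset.card_le_card_of_injOn Prod.snd
      (fun p _ => Finset.mem_univ p.2) (hinj i)
    simpa using this
  have key : ∀ i, ((L i).card = Fintype.card Q ↔ (d ≤ i ∧ i ≤ k)) := by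
    intro i
    constructor
    · intro h
      have himg : (L i).image Prod.snd = Finset.univ := by
        apply Finset.eq_univ_of_card
        rw [Finset.card_image_of_injOn (hinj i), h]
      have hall : ∀ q : Q, ∃ j : Fin k, (j : ℕ) + 1 + r q = i + 1 := by
        intro q
        have : q ∈ (L i).image Prod.snd := himg ▸ Finset.mem_univ q
        obtain ⟨p, hp, hpq⟩ := Finset.mem_image.mp this
        rw [hL] at hp
        simp only [Finset.mem_filter, Finset.mem_univ, true_and] at hp
        exact ⟨p.1, by rw [hpq] at hp; exact hp⟩
      obtain ⟨qd, hqd⟩ := hsurj d (Finset.mem_Icc.mpr ⟨by omega, by omega⟩)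
      obtain ⟨q1, hq1⟩ := hsurj 1 (Finset.mem_Icc.mpr ⟨by omega, by omega⟩)
      obtain ⟨jd, hjd⟩ := hall qd
      obtain ⟨j1, hj1⟩ := hall q1
      have h1 := j1.isLt
      rw [hqd] at hjd
      rw [hq1] at hj1
      constructor <;> omega
    · rintro ⟨hdi, hik⟩
      refine le_antisymm (hle i) ?_
      set f : Q → Fin k × Q := fun q =>
        (⟨i - r q, by have := (Finset.mem_Icc.mp (hrange q)).1; omega⟩, q) with hf
      have hfinj : Function.Injective f := fun a b hab => congrArg Prod.snd hab
      have hsub : Finset.univ.image f ⊆ L i := by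
        intro p hp
        obtain ⟨q, -, rfl⟩ := Finset.mem_image.mp hp
        rw [hL]
        simp only [Finset.mem_filter, Finset.mem_univ, true_and, hf]
        have h2 := Finset.mem_Icc.mp (hrange q)
        show (i - r q) + 1 + r q = i + 1
        omega
      calc Fintype.card Q = (Finset.univ.image f).card := by
            rw [Finset.card_image_of_injective _ hfinj, Finset.card_univ]
        _ ≤ (L i).card := Finset.card_le_card hsub
  constructor
  · have heq : (Finset.Icc 1 (d + k - 1)).filter
        (fun i => (L i).card = Fintype.card Q) = Finset.Icc d k := by
      ext i
      simp only [Finset.mem_filter, Finset.mem_Icc, key i]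
      omega
    rw [heq, Nat.card_Icc]
    omega
  · intro i _
    exact hle i
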